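/- arXiv:1602.08860 — 3 statements merged into one kernel-verified Lean document; each statement's English description precedes it below -/
import Mathlib

section
/- The path graph Z_n on n vertices is graceful for every n ≥ 2: the labelling that assigns to the k-th vertex along the path the value k/2 if k is even and n - (k+1)/2 if k is odd (for k = 0,...,n-1) is a graceful labelling. -/
/-- The path on `n ≥ 2` vertices is graceful: the labelling
`k ↦ k/2` for even `k` and `k ↦ n - (k+1)/2` for odd `k` is a graceful labelling. -/
theorem stmt11 (n : ℕ) (hn : 2 ≤ n)
    (g : ℕ → ℕ) (hg : ∀ k, g k = if k % 2 = 0 then k / 2 else n - (k + 1) / 2) :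
    (∀ k < n, g k ≤ n - 1) ∧
    Set.InjOn g (Set.Iio n) ∧
    Set.InjOn (fun k => max (g k) (g (k + 1)) - min (g k) (g (k + 1)))
      (Finset.range (n - 1)) ∧
    (Finset.range (n - 1)).image
        (fun k => max (g k) (g (k + 1)) - min (g k) (g (k + 1)))
      = Finset.Icc 1 (n - 1) := by
  have edge : ∀ k, k < n - 1 →
      max (g k) (g (k + 1)) - min (g k) (g (k + 1)) = n - 1 - k := by
    intro k hk
    have h1 := hg k
    have h2 := hg (k + 1)
    rcases le_total (g k) (g (k + 1)) with h | h
    · rw [max_eq_right h, min_eq_left h]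
      split_ifs at h1 h2 <;> omega
    · rw [max_eq_left h, min_eq_right h]
      split_ifs at h1 h2 <;> omega
  refine ⟨?_, ?_, ?_, ?_⟩
  · intro k hk
    rw [hg]
    split_ifs <;> omega
  · intro a ha b hb hab
    simp only [Set.mem_Iio] at ha hb
    rw [hg a, hg b] at hab
    split_ifs at hab <;> omega
  · intro a ha b hb hab
    simp only [Finset.coe_range, Set.mem_Iio] at ha hb
    simp only [edge a ha, edge b hb] at hab
    omega
  · ext x
    simp only [Finset.mem_image, Finset.mem_range, Finset.mem_Icc]
    constructor
    · rintro ⟨k, hk, rfl⟩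
      rw [edge k hk]
      omega
    · rintro ⟨hx1, hx2⟩
      exact ⟨n - 1 - x, by omega, by rw [edge (n - 1 - x) (by omega)]; omega⟩
end

section
/- If a graph G is Eulerian (connected with all vertex degrees even) and has e edges with e ≡ 1 or 2 (mod 4), then G is not graceful. In particular, the sum Σ_{edges {u,v}} |f(u)-f(v)| = e(e+1)/2 must have the same parity as Σ |f(u)-f(v)| taken mod 2, which for an Eulerian graph is even, giving a contradiction when e(e+1)/2 is odd. -/
/-- The induced edge label `|f u - f v|` (computed in ℕ as `max - min`). -/
def edgeLabel {V : Type*} (f : V → ℕ) : Sym2 V → ℕ :=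
  Sym2.lift ⟨fun u v => max (f u) (f v) - min (f u) (f v), fun u v => by
    simp [max_comm, min_comm]⟩

/-- An Eulerian graph (connected with all degrees even) with `e` edges,
`e ≡ 1` or `2 (mod 4)`, is not graceful. -/
theorem stmt17 {V : Type*} [Fintype V] [DecidableEq V]
    (G : SimpleGraph V) [DecidableRel G.Adj] (e : ℕ)
    (he : G.edgeFinset.card = e)
    (hconn : G.Connected) (heven : ∀ v : V, Even (G.degree v))
    (hmod : e % 4 = 1 ∨ e % 4 = 2) :
    ¬ ∃ f : V → ℕ, Function.Injective f ∧ (∀ v, f v ≤ e) ∧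
      Set.BijOn (edgeLabel f) G.edgeSet (Set.Icc 1 e) := by
  rintro ⟨f, hinj, hle, hbij⟩
  classical
  set S := ∑ s ∈ G.edgeFinset, edgeLabel f s with hS
  -- Step 1: S = e(e+1)/2, via the bijection onto Icc 1 e.
  have hsum : S = ∑ i ∈ Finset.Icc 1 e, i := by
    refine Finset.sum_bij (fun s _ => edgeLabel f s) ?_ ?_ ?_ ?_
    · intro s hs
      rw [Finset.mem_Icc, ← Set.mem_Icc]
      exact hbij.1 (by rwa [← SimpleGraph.mem_edgeFinset])
    · intro a ha b hb h
      exact hbij.2.1 (by rwa [← SimpleGraph.mem_edgeFinset])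
        (by rwa [← SimpleGraph.mem_edgeFinset]) h
    · intro b hb
      obtain ⟨a, ha, rfl⟩ := hbij.2.2 (by rwa [Set.mem_Icc, ← Finset.mem_Icc])
      exact ⟨a, by rwa [SimpleGraph.mem_edgeFinset], rfl⟩
    · intro a _; rfl
  have hS2 : S * 2 = e * (e + 1) := by
    have h1 : ∑ i ∈ Finset.Icc 1 e, i = ∑ i ∈ Finset.range (e + 1), i := by
      rw [Finset.range_eq_Ico, ← Finset.Ico_add_one_right_eq_Icc]
      rw [Finset.sum_Ico_eq_sum_range, ← Finset.range_eq_Ico,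
        Finset.sum_range_succ' (fun i => i) e]
      simp [add_comm]
    rw [hsum, h1, Finset.sum_range_id_mul_two]
    simp [Nat.mul_comm]
  have hSodd : S % 2 = 1 := by
    have : e * (e + 1) % 4 = 2 := by
      rw [Nat.mul_mod, Nat.add_mod]
      rcases hmod with h | h <;> rw [h] <;> rfl
    omega
  -- Step 2: S is even, mod 2.
  have hcast : ((S : ZMod 2)) = ∑ v : V, (G.degree v : ZMod 2) * (f v) := by
    rw [hS]
    push_cast
    have hstep : ∀ s ∈ G.edgeFinset,
        ((edgeLabel f s : ZMod 2)) = ∑ w ∈ Finset.univ, if w ∈ s then (f w : ZMod 2) else 0 := by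
      intro s hs
      induction s with
      | _ u v =>
        have hne : u ≠ v := (G.mem_edgeSet.mp (SimpleGraph.mem_edgeFinset.mp hs)).ne
        have hfilter : (Finset.univ.filter (· ∈ s(u, v))) = {u, v} := by
          ext w; simp [Sym2.mem_iff]
        rw [← Finset.sum_filter, hfilter, Finset.sum_pair hne]
        show ((max (f u) (f v) - min (f u) (f v) : ℕ) : ZMod 2) = _
        rw [Nat.cast_sub (min_le_max), CharTwo.sub_eq_add, ← Nat.cast_add, max_add_min]
        push_cast
        ring
    rw [Finset.sum_congr rfl hstep, Finset.sum_comm]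
    refine Finset.sum_congr rfl fun w _ => ?_
    rw [← Finset.sum_filter, Finset.sum_const, ← SimpleGraph.incidenceFinset_eq_filter,
      SimpleGraph.card_incidenceFinset_eq_degree]
    simp [mul_comm]
  have hzero : ((S : ZMod 2)) = 0 := by
    rw [hcast]
    refine Finset.sum_eq_zero fun v _ => ?_
    obtain ⟨k, hk⟩ := heven v
    rw [hk]
    push_cast
    ring_nf
    rw [show ((2 : ZMod 2)) = 0 by rfl]
    ring
  have hdvd : (2 : ℕ) ∣ S := (ZMod.natCast_eq_zero_iff S 2).mp hzero
  omega
end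

section
/- For every e ≥ 1, the number of pairs (G, f) where G is a graph on the vertex set {0,1,...,e} with exactly e edges and f is the identity which is a graceful labelling of G, equals e! ; equivalently, the number of ways to choose, for each i ∈ {1,...,e}, one pair (j, j+i) with 0 ≤ j ≤ e - i, is ∏_{i=1}^{e} (e - i + 1) = e!. -/
namespace Shep

variable {e : ℕ}

def vA (e : ℕ) (i : Fin e) (a : Fin (e - i)) : Fin (e + 1) :=
  ⟨a, by have := a.isLt; omega⟩

def vB (e : ℕ) (i : Fin e) (a : Fin (e - i)) : Fin (e + 1) :=
  ⟨a + i + 1, by have := a.isLt; omega⟩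

lemma label_edge (i : Fin e) (a : Fin (e - i)) :
    edgeLabel (fun v : Fin (e + 1) => (v : ℕ)) s(vA e i a, vB e i a) = i + 1 := by
  simp [edgeLabel, vA, vB]
  omega

def edgeOf (c : ∀ i : Fin e, Fin (e - i)) (i : Fin e) : Sym2 (Fin (e + 1)) :=
  s(vA e i (c i), vB e i (c i))

lemma edgeOf_inj (c : ∀ i : Fin e, Fin (e - i)) : Function.Injective (edgeOf c) := by
  intro i j h
  have := congrArg (edgeLabel (fun v : Fin (e + 1) => (v : ℕ))) h
  rw [edgeOf, edgeOf, label_edge, label_edge] at this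
  exact Fin.ext (by omega)

def F (c : ∀ i : Fin e, Fin (e - i)) : SimpleGraph (Fin (e + 1)) :=
  SimpleGraph.fromEdgeSet (Set.range (edgeOf c))

lemma edgeSet_F (c : ∀ i : Fin e, Fin (e - i)) :
    (F c).edgeSet = Set.range (edgeOf c) := by
  rw [F, SimpleGraph.edgeSet_fromEdgeSet]
  ext ε
  simp only [Set.mem_diff, Set.mem_setOf_eq]
  refine ⟨fun h => h.1, fun h => ⟨h, ?_⟩⟩
  obtain ⟨i, rfl⟩ := h
  rw [edgeOf, Sym2.mem_diagSet, Sym2.isDiag_iff_proj_eq]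
  intro hd
  have : (vA e i (c i) : ℕ) = (vB e i (c i) : ℕ) := congrArg Fin.val hd
  simp only [vA, vB, Fin.val_mk] at this
  omega

lemma eq_edge_form (i : Fin e) (ε : Sym2 (Fin (e + 1)))
    (h : edgeLabel (fun v : Fin (e + 1) => (v : ℕ)) ε = i + 1) :
    ∃ a : Fin (e - i), ε = s(vA e i a, vB e i a) := by
  induction ε using Sym2.ind with
  | _ u v =>
    simp only [edgeLabel, Sym2.lift_mk] at h
    rcases le_total (u : ℕ) (v : ℕ) with hle | hle
    · have hv := v.isLt
      refine ⟨⟨(u : ℕ), by omega⟩, ?_⟩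
      have h1 : u = vA e i ⟨(u : ℕ), by omega⟩ := Fin.ext rfl
      have h2 : v = vB e i ⟨(u : ℕ), by omega⟩ := Fin.ext (by simp [vB]; omega)
      rw [← h1, ← h2]
    · have hu := u.isLt
      refine ⟨⟨(v : ℕ), by omega⟩, ?_⟩
      have h1 : v = vA e i ⟨(v : ℕ), by omega⟩ := Fin.ext rfl
      have h2 : u = vB e i ⟨(v : ℕ), by omega⟩ := Fin.ext (by simp [vB]; omega)
      rw [← h1, ← h2, Sym2.eq_swap]

lemma F_mem (c : ∀ i : Fin e, Fin (e - i)) :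
    (F c).edgeSet.ncard = e ∧
      Set.BijOn (edgeLabel (fun v : Fin (e + 1) => (v : ℕ))) (F c).edgeSet
        (Set.Icc 1 e) := by
  rw [edgeSet_F]
  constructor
  · rw [← Set.image_univ, Set.ncard_image_of_injective _ (edgeOf_inj c),
      Set.ncard_univ, Nat.card_eq_fintype_card, Fintype.card_fin]
  · refine ⟨?_, ?_, ?_⟩
    · rintro ε ⟨i, rfl⟩
      rw [edgeOf, label_edge]
      exact ⟨by omega, by have := i.isLt; omega⟩
    · rintro ε₁ ⟨i, rfl⟩ ε₂ ⟨j, rfl⟩ h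
      rw [edgeOf, edgeOf, label_edge, label_edge] at h
      exact congrArg (edgeOf c) (Fin.ext (by omega))
    · rintro k ⟨hk1, hk2⟩
      refine ⟨edgeOf c ⟨k - 1, by omega⟩, ⟨_, rfl⟩, ?_⟩
      rw [edgeOf, label_edge]
      simp only [Fin.val_mk]
      omega

lemma F_inj : Function.Injective (F (e := e)) := by
  intro c c' h
  funext i
  have hset : Set.range (edgeOf c) = Set.range (edgeOf c') := by
    rw [← edgeSet_F, ← edgeSet_F, h]
  have hmem : edgeOf c i ∈ Set.range (edgeOf c') := hset ▸ Set.mem_range_self i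
  obtain ⟨j, hj⟩ := hmem
  have hlab := congrArg (edgeLabel (fun v : Fin (e + 1) => (v : ℕ))) hj
  rw [edgeOf, edgeOf, label_edge, label_edge] at hlab
  have hij : j = i := Fin.ext (by omega)
  subst hij
  rw [edgeOf, edgeOf, Sym2.mk_eq_mk_iff (p := (vA e j (c' j), vB e j (c' j)))
    (q := (vA e j (c j), vB e j (c j)))] at hj
  rcases hj with h1 | h1
  · have : (vA e j (c' j) : ℕ) = (vA e j (c j) : ℕ) :=
      congrArg Fin.val (Prod.ext_iff.mp h1).1
    exact (Fin.ext this.symm)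
  · have h2 : (vA e j (c' j) : ℕ) = (vB e j (c j) : ℕ) :=
      congrArg Fin.val (Prod.ext_iff.mp h1).1
    have h3 : (vB e j (c' j) : ℕ) = (vA e j (c j) : ℕ) :=
      congrArg Fin.val (Prod.ext_iff.mp h1).2
    simp [vA, vB] at h2 h3
    omega

lemma F_surj (G : SimpleGraph (Fin (e + 1)))
    (hG : G.edgeSet.ncard = e ∧
      Set.BijOn (edgeLabel (fun v : Fin (e + 1) => (v : ℕ))) G.edgeSet
        (Set.Icc 1 e)) : ∃ c, F c = G := by
  obtain ⟨hcard, hmaps, hinj, hsurj⟩ := hG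
  have key : ∀ i : Fin e, ∃ a : Fin (e - i),
      s(vA e i a, vB e i a) ∈ G.edgeSet := by
    intro i
    obtain ⟨ε, hε, hlab⟩ := hsurj (show (i : ℕ) + 1 ∈ Set.Icc 1 e from
      ⟨by omega, by have := i.isLt; omega⟩)
    obtain ⟨a, rfl⟩ := eq_edge_form i ε hlab
    exact ⟨a, hε⟩
  choose c hc using key
  refine ⟨c, ?_⟩
  have hsub : Set.range (edgeOf c) ⊆ G.edgeSet := by
    rintro ε ⟨i, rfl⟩; exact hc i
  have hfin : G.edgeSet.Finite := Set.toFinite _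
  have hrange : (Set.range (edgeOf c)).ncard = e := by
    rw [← Set.image_univ, Set.ncard_image_of_injective _ (edgeOf_inj c),
      Set.ncard_univ, Nat.card_eq_fintype_card, Fintype.card_fin]
  have heq : Set.range (edgeOf c) = G.edgeSet :=
    Set.eq_of_subset_of_ncard_le hsub (by rw [hrange, hcard]) hfin
  rw [F, heq, SimpleGraph.fromEdgeSet_edgeSet]

lemma prod_range : ∏ i ∈ Finset.range e, (e - i) = Nat.factorial e := by
  rw [← Finset.prod_range_reflect]
  have : ∀ i ∈ Finset.range e, e - (e - 1 - i) = i + 1 := by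
    intro i hi; rw [Finset.mem_range] at hi; omega
  rw [Finset.prod_congr rfl this]
  exact Finset.prod_range_add_one_eq_factorial e

end Shep

/-- Sheppard's theorem: for every `e ≥ 1` there are exactly `e!` graphs on the
vertex set `{0,…,e}` with `e` edges for which the identity labelling is
graceful; equivalently, `∏_{i=1}^{e} (e - i + 1) = e!`. -/
theorem stmt18 (e : ℕ) (he : 1 ≤ e) :
    {G : SimpleGraph (Fin (e + 1)) | G.edgeSet.ncard = e ∧
        Set.BijOn (edgeLabel (fun v : Fin (e + 1) => (v : ℕ))) G.edgeSet
          (Set.Icc 1 e)}.ncard = Nat.factorial e ∧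
    ∏ i ∈ Finset.Icc 1 e, (e - i + 1) = Nat.factorial e := by
  constructor
  · have hS : {G : SimpleGraph (Fin (e + 1)) | G.edgeSet.ncard = e ∧
        Set.BijOn (edgeLabel (fun v : Fin (e + 1) => (v : ℕ))) G.edgeSet
          (Set.Icc 1 e)} = Set.range (Shep.F (e := e)) := by
      ext G
      constructor
      · intro hG
        obtain ⟨c, hc⟩ := Shep.F_surj G hG
        exact ⟨c, hc⟩
      · rintro ⟨c, rfl⟩
        exact Shep.F_mem c
    rw [hS, ← Nat.card_coe_set_eq, Nat.card_range_of_injective Shep.F_inj,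
      Nat.card_eq_fintype_card, Fintype.card_pi]
    simp only [Fintype.card_fin]
    rw [Fin.prod_univ_eq_prod_range]
    exact Shep.prod_range
  · rw [← Shep.prod_range (e := e)]
    refine Finset.prod_nbij (fun i => i - 1) ?_ ?_ ?_ ?_
    · intro a ha
      simp only [Finset.mem_Icc] at ha
      simp only [Finset.mem_range]; omega
    · intro a ha b hb hab
      simp only [Finset.coe_Icc, Set.mem_Icc] at ha hb
      dsimp only at hab; omega
    · intro b hb
      simp only [Finset.coe_range, Set.mem_Iio] at hb
      refine ⟨b + 1, ?_, ?_⟩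
      · simp only [Finset.coe_Icc, Set.mem_Icc]; omega
      · dsimp only; omega
    · intro a ha
      simp only [Finset.mem_Icc] at ha
      omega
end
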